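/- The loop elementary symmetric functions e_k^{(r)}(x_1,...,x_m) are invariant under each map s_i: s_i(e_k^{(r)}) = e_k^{(r)} for all k ≥ 0, all colors r, and all 1 ≤ i ≤ m-1. -/

import Mathlib

open Finset

/-- Multiplication of (upper-triangular) N-by-N matrices: for upper triangular
matrices this agrees with true matrix multiplication. -/
def utMul {K : Type*} [Field K] (A B : Matrix ℕ ℕ K) : Matrix ℕ ℕ K :=
  Matrix.of fun i j => ∑ t ∈ Finset.Icc i j, A i t * B t j

/-- The identity infinite matrix. -/
def oneM {K : Type*} [Field K] : Matrix ℕ ℕ K := Matrix.of fun i j => if i = j then 1 else 0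

/-- Checkerboard conjugate `A^c` of an infinite matrix. -/
def chkInf {K : Type*} [Field K] (A : Matrix ℕ ℕ K) : Matrix ℕ ℕ K :=
  Matrix.of fun i j => (-1 : K) ^ (i + j) * A i j

/-- The whirl `M(a_1, …, a_n)`: upper bitriangular with 1's on the diagonal and
`a_i` (index mod `n`) on the superdiagonal. -/
def whirl {K : Type*} [Field K] (n : ℕ) (a : ZMod n → K) : Matrix ℕ ℕ K :=
  Matrix.of fun i j => if j = i then 1 else if j = i + 1 then a (i : ZMod n) else 0

/-- `κ^{(r)}(x,y) = Σ_{j=0}^{n-1} y^{(r+1)}⋯y^{(r+j)} x^{(r+j+1)}⋯x^{(r+n-1)}`. -/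
def kappa {K : Type*} [Field K] (n : ℕ) (xx yy : ZMod n → K) (r : ZMod n) : K :=
  ∑ j ∈ Finset.range n,
    (∏ t ∈ Finset.Icc 1 j, yy (r + (t : ZMod n))) *
      ∏ t ∈ Finset.Icc (j + 1) (n - 1), xx (r + (t : ZMod n))

/-- Loop elementary symmetric function
`e_k^{(r)} = Σ_{i_1 < ⋯ < i_k} x_{i_1}^{(r)} x_{i_2}^{(r+1)} ⋯ x_{i_k}^{(r+k-1)}`. -/
def loopE {K : Type*} [Field K] (m n : ℕ) (x : Fin m → ZMod n → K) (k : ℕ) (r : ZMod n) : K :=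
  ∑ f ∈ Finset.univ.filter (fun f : Fin k → Fin m => ∀ a b : Fin k, a < b → f a < f b),
    ∏ t : Fin k, x (f t) (r + ((t : ℕ) : ZMod n))

/-- Loop homogeneous symmetric function
`h_k^{(r)} = Σ_{i_k ≥ ⋯ ≥ i_1} x_{i_k}^{(r)} x_{i_{k-1}}^{(r+1)} ⋯ x_{i_1}^{(r+k-1)}`,
encoded via the weakly increasing sequence `f = (i_1, …, i_k)`. -/
def loopH {K : Type*} [Field K] (m n : ℕ) (x : Fin m → ZMod n → K) (k : ℕ) (r : ZMod n) : K :=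
  ∑ f ∈ Finset.univ.filter (fun f : Fin k → Fin m => ∀ a b : Fin k, a ≤ b → f a ≤ f b),
    ∏ t : Fin k, x (f t) (r + ((k - 1 - (t : ℕ) : ℕ) : ZMod n))

/-- Loop homogeneous symmetric function with integer index, `0` for negative index. -/
noncomputable def loopHZ {K : Type*} [Field K] (m n : ℕ) (x : Fin m → ZMod n → K)
    (k : ℤ) (r : ZMod n) : K :=
  if k < 0 then 0 else loopH m n x k.toNat r

/-- Single-block loop homogeneous function `h_a^{(b)}(y) = y^{(b+a-1)} y^{(b+a-2)} ⋯ y^{(b)}`. -/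
def singleH {K : Type*} [Field K] (n : ℕ) (y : ZMod n → K) (a : ℕ) (b : ZMod n) : K :=
  ∏ s ∈ Finset.range a, y (b + (s : ZMod n))

/-- `π = y^{(1)} y^{(2)} ⋯ y^{(n)}`, the product over all colors of one block. -/
def pivar {K : Type*} [Field K] (n : ℕ) [NeZero n] (y : ZMod n → K) : K := ∏ j : ZMod n, y j


lemma Lprod {K : Type*} [Field K] {n : ℕ} [NeZero n] (f : ZMod n → K) (r : ZMod n) :
    ∏ t ∈ range n, f (r + (t : ZMod n)) = ∏ c : ZMod n, f c := by
  refine Finset.prod_nbij' (fun t => r + (t : ZMod n)) (fun c => (c - r).val) ?_ ?_ ?_ ?_ ?_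
  · intro a _; exact mem_univ _
  · intro c _; exact mem_range.2 (ZMod.val_lt _)
  · intro a ha
    rw [add_sub_cancel_left, ZMod.val_natCast_of_lt (mem_range.1 ha)]
  · intro c _
    rw [ZMod.natCast_val, ZMod.cast_id, add_sub_cancel]
  · intro a _; rfl

def Yp {K : Type*} [Field K] {n : ℕ} (yy : ZMod n → K) (r : ZMod n) (j : ℕ) : K :=
  ∏ s ∈ range j, yy (r + 1 + (s : ZMod n))

def Xp {K : Type*} [Field K] {n : ℕ} (xx : ZMod n → K) (r : ZMod n) (j : ℕ) : K :=
  ∏ s ∈ range (n - 1 - j), xx (r + ((j + 1 : ℕ) : ZMod n) + (s : ZMod n))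

lemma kappa_eq {K : Type*} [Field K] {n : ℕ} [NeZero n] (xx yy : ZMod n → K) (r : ZMod n) :
    kappa n xx yy r = ∑ j ∈ range n, Yp yy r j * Xp xx r j := by
  have hn := Nat.pos_of_ne_zero (NeZero.ne n)
  unfold kappa Yp Xp
  refine Finset.sum_congr rfl fun j _ => ?_
  congr 1
  · rw [← Finset.Ico_add_one_right_eq_Icc, Finset.prod_Ico_eq_prod_range]
    refine Finset.prod_congr (by simp) fun s _ => ?_
    push_cast; ring_nf
  · rw [← Finset.Ico_add_one_right_eq_Icc, show n - 1 + 1 = n by omega,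
      Finset.prod_Ico_eq_prod_range]
    refine Finset.prod_congr (by congr 1; omega) fun s _ => ?_
    push_cast; ring_nf

lemma claim1 {K : Type*} [Field K] {n : ℕ} [NeZero n] (xx yy : ZMod n → K) (r : ZMod n) :
    yy (r + 1) * kappa n xx yy (r + 1) + ∏ c : ZMod n, xx c
      = xx r * kappa n xx yy r + ∏ c : ZMod n, yy c := by
  obtain ⟨n', rfl⟩ := Nat.exists_eq_succ_of_ne_zero (NeZero.ne n)
  have hY : ∀ (c : ZMod (n' + 1)) j, yy (c + 1) * Yp yy (c + 1) j = Yp yy c (j + 1) := by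
    intro c j
    unfold Yp
    rw [prod_range_succ', mul_comm]
    congr 1
    · refine Finset.prod_congr rfl fun s _ => ?_
      congr 1; push_cast; ring
    · congr 1; push_cast; ring
  have hX : ∀ j, j < n' → Xp xx (r + 1) j = Xp xx r (j + 1) * xx r := by
    intro j hj
    unfold Xp
    rw [show n' + 1 - 1 - j = (n' + 1 - 1 - (j + 1)) + 1 by omega, prod_range_succ]
    congr 1
    · refine Finset.prod_congr rfl fun s _ => ?_
      congr 1; push_cast; ring
    · congr 1
      have h : (1 : ℕ) + (j + 1) + (n' - j - 1) = n' + 1 := by omega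
      calc r + 1 + ((j + 1 : ℕ) : ZMod (n' + 1)) + ((n' + 1 - 1 - (j + 1) : ℕ) : ZMod (n' + 1))
          = r + (((1 + (j + 1) + (n' - j - 1) : ℕ)) : ZMod (n' + 1)) := by
            rw [show n' + 1 - 1 - (j + 1) = n' - j - 1 from by omega]; push_cast; ring
        _ = r + ((n' + 1 : ℕ) : ZMod (n' + 1)) := by rw [h]
        _ = r := by rw [ZMod.natCast_self, add_zero]
  have e1 : yy (r + 1) * ∑ j ∈ range (n' + 1), Yp yy (r + 1) j * Xp xx (r + 1) j
      = (∑ j ∈ range n', xx r * (Yp yy r (j + 1) * Xp xx r (j + 1))) + ∏ c, yy c := by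
    rw [Finset.mul_sum, sum_range_succ]
    congr 1
    · exact sum_congr rfl fun j hj => by
        rw [← mul_assoc, hY, hX j (mem_range.1 hj)]; ring
    · rw [show Xp xx (r + 1) n' = 1 from by simp [Xp], mul_one, hY]
      unfold Yp
      exact Lprod yy (r + 1)
  have e2 : xx r * ∑ j ∈ range (n' + 1), Yp yy r j * Xp xx r j
      = (∑ j ∈ range n', xx r * (Yp yy r (j + 1) * Xp xx r (j + 1))) + ∏ c, xx c := by
    rw [Finset.mul_sum, sum_range_succ']
    congr 1
    rw [show Yp yy r 0 = 1 from by simp [Yp], one_mul]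
    unfold Xp
    rw [← Lprod xx r, prod_range_succ', mul_comm]
    congr 1
    · refine Finset.prod_congr (by norm_num) fun s _ => ?_
      congr 1; push_cast; ring
    · norm_num
  rw [kappa_eq, kappa_eq, e1, e2]
  ring

lemma lemA {K : Type*} [Field K] {n : ℕ} [NeZero n] (xx yy : ZMod n → K) (σ : K →+* K)
    (hκ : ∀ r, kappa n xx yy r ≠ 0)
    (h1 : ∀ j, σ (xx j) = yy (j + 1) * kappa n xx yy (j + 1) / kappa n xx yy j)
    (h2 : ∀ j, σ (yy j) = xx (j - 1) * kappa n xx yy (j - 1) / kappa n xx yy j)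
    (r : ZMod n) : σ (xx r) + σ (yy r) = xx r + yy r := by
  rw [h1, h2, ← add_div, div_eq_iff (hκ r)]
  have c1 := claim1 xx yy r
  have c2 := claim1 xx yy (r - 1)
  rw [sub_add_cancel] at c2
  linear_combination c1 - c2

lemma lemB {K : Type*} [Field K] {n : ℕ} [NeZero n] (xx yy : ZMod n → K) (σ : K →+* K)
    (hκ : ∀ r, kappa n xx yy r ≠ 0)
    (h1 : ∀ j, σ (xx j) = yy (j + 1) * kappa n xx yy (j + 1) / kappa n xx yy j)
    (h2 : ∀ j, σ (yy j) = xx (j - 1) * kappa n xx yy (j - 1) / kappa n xx yy j)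
    (r : ZMod n) : σ (xx r) * σ (yy (r + 1)) = xx r * yy (r + 1) := by
  rw [h1, h2, add_sub_cancel_right, div_mul_div_comm,
    div_eq_iff (mul_ne_zero (hκ r) (hκ (r + 1)))]
  ring

def loopEP {K : Type*} [Field K] (m n : ℕ) (x : Fin m → ZMod n → K) (p k : ℕ) (r : ZMod n) : K :=
  ∑ f ∈ Finset.univ.filter (fun f : Fin k → Fin m =>
      (∀ a b : Fin k, a < b → f a < f b) ∧ ∀ a, (f a : ℕ) < p),
    ∏ t : Fin k, x (f t) (r + ((t : ℕ) : ZMod n))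

lemma loopE_eq_loopEP {K : Type*} [Field K] (m n : ℕ) (x : Fin m → ZMod n → K) (k : ℕ)
    (r : ZMod n) : loopE m n x k r = loopEP m n x m k r := by
  unfold loopE loopEP
  refine Finset.sum_congr ?_ fun _ _ => rfl
  apply Finset.filter_congr
  intro f _
  exact ⟨fun h => ⟨h, fun a => (f a).is_lt⟩, fun h => h.1⟩

lemma loopEP_zero {K : Type*} [Field K] (m n : ℕ) (x : Fin m → ZMod n → K) (p : ℕ)
    (r : ZMod n) : loopEP m n x p 0 r = 1 := by
  unfold loopEP
  rw [Finset.filter_true_of_mem (fun f _ => ⟨fun a _ _ => a.elim0, fun a => a.elim0⟩)]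
  rw [Finset.sum_congr rfl fun f _ => Fin.prod_univ_zero _]
  rw [Finset.sum_const, Finset.card_univ]
  simp

lemma loopEP_succ {K : Type*} [Field K] (m n : ℕ) (x : Fin m → ZMod n → K) (p k : ℕ)
    (hp : p < m) (r : ZMod n) :
    loopEP m n x (p + 1) (k + 1) r = loopEP m n x p (k + 1) r
      + loopEP m n x p k r * x ⟨p, hp⟩ (r + (k : ZMod n)) := by
  classical
  unfold loopEP
  rw [← Finset.sum_filter_add_sum_filter_not
    (Finset.univ.filter (fun f : Fin (k + 1) → Fin m =>
      (∀ a b : Fin (k + 1), a < b → f a < f b) ∧ ∀ a, (f a : ℕ) < p + 1))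
    (fun f => (f (Fin.last k) : ℕ) < p)]
  congr 1
  · -- terms with all values < p
    refine Finset.sum_congr ?_ fun _ _ => rfl
    rw [Finset.filter_filter]
    apply Finset.filter_congr
    intro f _
    constructor
    · rintro ⟨⟨hinc, hbd⟩, hlast⟩
      refine ⟨hinc, fun a => ?_⟩
      rcases eq_or_lt_of_le (Fin.le_last a) with h | h
      · rw [h]; exact hlast
      · exact lt_trans (hinc a _ h) hlast
    · rintro ⟨hinc, hbd⟩
      exact ⟨⟨hinc, fun a => (hbd a).trans (Nat.lt_succ_self p)⟩, hbd (Fin.last k)⟩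
  · -- terms with f (last) = p
    rw [Finset.sum_mul]
    refine Finset.sum_nbij' (fun f => f ∘ Fin.castSucc)
      (fun g => Fin.snoc g ⟨p, hp⟩) ?_ ?_ ?_ ?_ ?_
    · -- forward membership
      intro f hf
      simp only [Finset.mem_filter, Finset.mem_univ, true_and] at hf ⊢
      obtain ⟨⟨hinc, hbd⟩, hlast⟩ := hf
      have hlv : (f (Fin.last k) : ℕ) = p := by
        have := hbd (Fin.last k); omega
      refine ⟨fun a b hab => hinc _ _ (by simpa using hab), fun a => ?_⟩
      simp only [Function.comp_apply]
      have h1 : f (Fin.castSucc a) < f (Fin.last k) :=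
        hinc _ _ (Fin.castSucc_lt_last a)
      have := Fin.lt_def.1 h1
      omega
    · -- backward membership
      intro g hg
      simp only [Finset.mem_filter, Finset.mem_univ, true_and] at hg ⊢
      obtain ⟨hinc, hbd⟩ := hg
      have hlt : ∀ (a : Fin (k + 1)) (ha : a ≠ Fin.last k),
          (Fin.snoc g (⟨p, hp⟩ : Fin m) : Fin (k + 1) → Fin m) a = g (a.castPred ha) := by
        intro a ha
        conv_lhs => rw [← Fin.castSucc_castPred a ha]
        rw [Fin.snoc_castSucc]
      constructor
      · constructor
        · intro a b hab
          by_cases hb : b = Fin.last k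
          · subst hb
            have ha : a ≠ Fin.last k := ne_of_lt hab
            rw [hlt a ha, Fin.snoc_last]
            exact Fin.lt_def.2 (hbd _)
          · have ha : a ≠ Fin.last k := by
              intro h; subst h
              exact hb (le_antisymm (Fin.le_last b) (le_of_lt hab))
            rw [hlt a ha, hlt b hb]
            apply hinc
            exact Fin.lt_def.2 (Fin.lt_def.1 hab)
        · intro a
          by_cases ha : a = Fin.last k
          · subst ha; rw [Fin.snoc_last]; exact Nat.lt_succ_self p
          · rw [hlt a ha]
            exact (hbd _).trans (Nat.lt_succ_self p)
      · rw [Fin.snoc_last]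
        exact lt_irrefl p
    · -- left inverse
      intro f hf
      simp only [Finset.mem_filter, Finset.mem_univ, true_and] at hf
      obtain ⟨⟨hinc, hbd⟩, hlast⟩ := hf
      have hlv : (f (Fin.last k) : ℕ) = p := by
        have := hbd (Fin.last k); omega
      funext a
      induction a using Fin.lastCases with
      | last =>
        simp only [Fin.snoc_last]
        exact Fin.ext hlv.symm
      | cast a =>
        simp only [Fin.snoc_castSucc]
        rfl
    · -- right inverse
      intro g _
      funext a
      simp only [Function.comp_apply, Fin.snoc_castSucc]
    · -- values
      intro f hf
      rw [Fin.prod_univ_castSucc]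
      simp only [Function.comp_apply, Fin.coe_castSucc, Fin.val_last]
      simp only [Finset.mem_filter, Finset.mem_univ, true_and] at hf
      obtain ⟨⟨hinc, hbd⟩, hlast⟩ := hf
      have hlv : (f (Fin.last k) : ℕ) = p := by
        have := hbd (Fin.last k); omega
      congr 1
      rw [show f (Fin.last k) = ⟨p, hp⟩ from Fin.ext hlv]

lemma baseinv {K : Type*} [Field K] {m n : ℕ} (x : Fin m → ZMod n → K) (σ : K →+* K)
    (i i' : Fin m) (hii' : (i' : ℕ) = (i : ℕ) + 1)
    (h3 : ∀ k j, k ≠ i → k ≠ i' → σ (x k j) = x k j)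
    (p : ℕ) (hp : p ≤ (i : ℕ)) (k : ℕ) (r : ZMod n) :
    σ (loopEP m n x p k r) = loopEP m n x p k r := by
  unfold loopEP
  rw [map_sum]
  refine Finset.sum_congr rfl fun f hf => ?_
  rw [map_prod]
  refine Finset.prod_congr rfl fun t _ => ?_
  simp only [Finset.mem_filter, Finset.mem_univ, true_and] at hf
  have hb := hf.2 t
  refine h3 _ _ (fun h => ?_) (fun h => ?_)
  · rw [h] at hb; omega
  · rw [h] at hb; rw [hii'] at hb; omega

lemma maininv {K : Type*} [Field K] {m n : ℕ} [NeZero n] (x : Fin m → ZMod n → K)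
    (i i' : Fin m) (hii' : (i' : ℕ) = (i : ℕ) + 1)
    (hκ : ∀ r, kappa n (x i) (x i') r ≠ 0)
    (σ : K →+* K)
    (h1 : ∀ j, σ (x i j) =
      x i' (j + 1) * kappa n (x i) (x i') (j + 1) / kappa n (x i) (x i') j)
    (h2 : ∀ j, σ (x i' j) =
      x i (j - 1) * kappa n (x i) (x i') (j - 1) / kappa n (x i) (x i') j) 
    (h3 : ∀ k j, k ≠ i → k ≠ i' → σ (x k j) = x k j) :
    ∀ d, (i : ℕ) + 2 + d ≤ m → ∀ k r,
      σ (loopEP m n x ((i : ℕ) + 2 + d) k r) = loopEP m n x ((i : ℕ) + 2 + d) k r := by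
  have hA := lemA (x i) (x i') σ hκ h1 h2
  have hB := lemB (x i) (x i') σ hκ h1 h2
  have him : (i : ℕ) < m := i.is_lt
  have hi'm : (i : ℕ) + 1 < m := hii' ▸ i'.is_lt
  have hieq : (⟨(i : ℕ), him⟩ : Fin m) = i := rfl
  have hi'eq : (⟨(i : ℕ) + 1, hi'm⟩ : Fin m) = i' := Fin.ext hii'.symm
  intro d
  induction d with
  | zero =>
    intro hm k r
    match k with
    | 0 => rw [loopEP_zero, map_one]
    | 1 =>
      rw [show (i : ℕ) + 2 + 0 = ((i : ℕ) + 1) + 1 from rfl,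
        loopEP_succ m n x ((i : ℕ) + 1) 0 hi'm r,
        loopEP_succ m n x (i : ℕ) 0 him r, loopEP_zero, loopEP_zero, one_mul, one_mul,
        hieq, hi'eq]
      rw [map_add, map_add, baseinv x σ i i' hii' h3 _ le_rfl]
      have := hA (r + ((0 : ℕ) : ZMod n))
      linear_combination this
    | (k' + 2) =>
      rw [show (i : ℕ) + 2 + 0 = ((i : ℕ) + 1) + 1 from rfl,
        loopEP_succ m n x ((i : ℕ) + 1) (k' + 1) hi'm r,
        loopEP_succ m n x (i : ℕ) (k' + 1) him r,
        loopEP_succ m n x (i : ℕ) k' him r, hieq, hi'eq]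
      rw [map_add, map_add, map_mul, map_mul, map_add, map_mul,
        baseinv x σ i i' hii' h3 _ le_rfl,
        baseinv x σ i i' hii' h3 _ le_rfl,
        baseinv x σ i i' hii' h3 _ le_rfl]
      have e1 := hA (r + ((k' + 1 : ℕ) : ZMod n))
      have e2 := hB (r + ((k' : ℕ) : ZMod n))
      have hc : r + ((k' : ℕ) : ZMod n) + 1 = r + ((k' + 1 : ℕ) : ZMod n) := by
        push_cast; ring
      rw [hc] at e2
      linear_combination loopEP m n x (↑i) (k' + 1) r * e1 + loopEP m n x (↑i) k' r * e2
  | succ d ih =>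
    intro hm k r
    have hpm : (i : ℕ) + 2 + d < m := by omega
    have hne1 : (⟨(i : ℕ) + 2 + d, hpm⟩ : Fin m) ≠ i := by
      intro h; have := congrArg Fin.val h; simp at this; omega
    have hne2 : (⟨(i : ℕ) + 2 + d, hpm⟩ : Fin m) ≠ i' := by
      intro h; have := congrArg Fin.val h; rw [hii'] at this; simp at this; omega
    match k with
    | 0 => rw [loopEP_zero, map_one]
    | (k' + 1) =>
      rw [show (i : ℕ) + 2 + (d + 1) = ((i : ℕ) + 2 + d) + 1 from rfl,
        loopEP_succ m n x ((i : ℕ) + 2 + d) k' hpm r]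
      rw [map_add, map_mul, ih (by omega) (k' + 1) r, ih (by omega) k' r,
        h3 _ _ hne1 hne2]

/-- Invariance of loop elementary symmetric functions under the birational map `s_i`. -/
theorem statement10 {K : Type*} [Field K] (m n : ℕ) [NeZero n] (x : Fin m → ZMod n → K)
    (i i' : Fin m) (hii' : (i' : ℕ) = (i : ℕ) + 1)
    (hκ : ∀ r, kappa n (x i) (x i') r ≠ 0)
    (σ : K →+* K)
    (h1 : ∀ j, σ (x i j) =
      x i' (j + 1) * kappa n (x i) (x i') (j + 1) / kappa n (x i) (x i') j)
    (h2 : ∀ j, σ (x i' j) =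
      x i (j - 1) * kappa n (x i) (x i') (j - 1) / kappa n (x i) (x i') j)
    (h3 : ∀ k j, k ≠ i → k ≠ i' → σ (x k j) = x k j) :
    ∀ (k : ℕ) (r : ZMod n), σ (loopE m n x k r) = loopE m n x k r := by
  intro k r
  rw [loopE_eq_loopEP]
  have h2m : (i : ℕ) + 2 ≤ m := by have := i'.is_lt; omega
  obtain ⟨d, hd⟩ : ∃ d, m = (i : ℕ) + 2 + d := ⟨m - ((i : ℕ) + 2), by omega⟩
  have h := maininv x i i' hii' hκ σ h1 h2 h3 d (le_of_eq hd.symm) k r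
  rw [← hd] at h
  exact h
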